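/- Let G be a connected graph every block of which is a complete graph of odd order. Then G has no IPD. -/

import Mathlib

open SimpleGraph

variable {V : Type*} [Fintype V]

/-- P is a set of vertices inducing a path on n vertices in G. -/
def IsInducedPathOn (G : SimpleGraph V) (P : Set V) (n : ℕ) : Prop :=
  Nonempty (G.induce P ≃g pathGraph n)

/-- G has an induced path decomposition into induced paths each of order ≥ 2. -/
def HasIPD (G : SimpleGraph V) : Prop :=
  ∃ D : Set (Set V), Setoid.IsPartition D ∧
    ∀ P ∈ D, ∃ n, 2 ≤ n ∧ IsInducedPathOn G P n

/-- The induced subgraph on B is connected (or a single vertex / empty ok? require Connected)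
and has no cut vertex. -/
def NoCutVertexSet (G : SimpleGraph V) (B : Set V) : Prop :=
  (G.induce B).Connected ∧ ∀ v ∈ B, (G.induce (B \ {v})).Preconnected

/-- B is a block (maximal 2-connected piece, in the sense of no cut vertex) of the subgraph
of G induced on H. -/
def IsBlockWithin (G : SimpleGraph V) (H B : Set V) : Prop :=
  B ⊆ H ∧ NoCutVertexSet G B ∧
    ∀ B', B ⊆ B' → B' ⊆ H → NoCutVertexSet G B' → B' = B

/-- B is a block of G. -/
def IsBlock (G : SimpleGraph V) (B : Set V) : Prop :=
  IsBlockWithin G Set.univ B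

/-- The set B induces a complete graph of odd order. -/
def IsOddComplete (G : SimpleGraph V) (B : Set V) : Prop :=
  Odd B.ncard ∧ ∀ u ∈ B, ∀ v ∈ B, u ≠ v → G.Adj u v

/-- v is a cut vertex of the subgraph of G induced on H. -/
def IsCutVertexWithin (G : SimpleGraph V) (H : Set V) (v : V) : Prop :=
  v ∈ H ∧ ∃ x y : V, ∃ hx : x ∈ H \ {v}, ∃ hy : y ∈ H \ {v},
    (G.induce H).Reachable ⟨x, hx.1⟩ ⟨y, hy.1⟩ ∧
      ¬ (G.induce (H \ {v})).Reachable ⟨x, hx⟩ ⟨y, hy⟩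

/-- B is a leaf block of the subgraph of G induced on H: a block containing at most one
cut vertex. -/
def IsLeafBlockWithin (G : SimpleGraph V) (H B : Set V) : Prop :=
  IsBlockWithin G H B ∧ {v ∈ B | IsCutVertexWithin G H v}.Subsingleton

/-- C is a connected component of G - S. -/
def IsComponentAvoiding (G : SimpleGraph V) (S C : Set V) : Prop :=
  C.Nonempty ∧ Disjoint C S ∧ (G.induce C).Connected ∧
    ∀ x ∈ C, ∀ y, y ∉ S → G.Adj x y → y ∈ C

/-- G is claw-free. -/
def ClawFree (G : SimpleGraph V) : Prop :=
  IsEmpty (completeBipartiteGraph (Fin 1) (Fin 3) ↪g G)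

set_option linter.unusedSectionVars false
set_option linter.unusedVariables false
set_option maxHeartbeats 1000000

def StepIn (G : SimpleGraph V) (H : Set V) (a b : V) : Prop :=
  a ∈ H ∧ b ∈ H ∧ G.Adj a b

def ReachIn (G : SimpleGraph V) (H : Set V) (x y : V) : Prop :=
  Relation.ReflTransGen (StepIn G H) x y

namespace ReachIn

variable {G : SimpleGraph V} {H H' : Set V} {x y z : V}

lemma refl : ReachIn G H x x := Relation.ReflTransGen.refl

lemma trans (h1 : ReachIn G H x y) (h2 : ReachIn G H y z) : ReachIn G H x z :=
  Relation.ReflTransGen.trans h1 h2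

lemma symm (h : ReachIn G H x y) : ReachIn G H y x :=
  by
    haveI : Std.Symm (StepIn G H) := ⟨fun a b ⟨ha, hb, hadj⟩ => ⟨hb, ha, hadj.symm⟩⟩
    exact Std.Symm.symm (r := Relation.ReflTransGen (StepIn G H)) _ _ h

lemma single (ha : x ∈ H) (hb : y ∈ H) (h : G.Adj x y) : ReachIn G H x y :=
  Relation.ReflTransGen.single ⟨ha, hb, h⟩

lemma mono (hHH : H ⊆ H') (h : ReachIn G H x y) : ReachIn G H' x y :=
  Relation.ReflTransGen.mono (fun _ _ ⟨ha, hb, hadj⟩ => ⟨hHH ha, hHH hb, hadj⟩) _ _ h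

lemma mem_right (h : ReachIn G H x y) (hx : x ∈ H) : y ∈ H := by
  induction h with
  | refl => exact hx
  | tail _ hstep ih => exact hstep.2.1

/-- map a reachIn through a "retraction" -/
lemma map (f : V → V) (hf : ∀ a b, StepIn G H a b → f a = f b ∨ StepIn G H' (f a) (f b))
    (h : ReachIn G H x y) : ReachIn G H' (f x) (f y) := by
  induction h with
  | refl => exact refl
  | tail _ hstep ih =>
      rcases hf _ _ hstep with heq | hs
      · rwa [heq] at ih
      · exact ih.trans (Relation.ReflTransGen.single hs)

lemma eq_or_mem (h : ReachIn G H x y) : x = y ∨ x ∈ H := by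
  induction h using Relation.ReflTransGen.head_induction_on with
  | refl => exact Or.inl rfl
  | head hstep _ _ => exact Or.inr hstep.1

end ReachIn

section Bridge

variable {G : SimpleGraph V} {A : Set V}

lemma reachIn_of_reachable {x y : A} (h : (G.induce A).Reachable x y) :
    ReachIn G A x y := by
  obtain ⟨w⟩ := h
  induction w with
  | nil => exact ReachIn.refl
  | @cons a b c h p ih =>
      exact (ReachIn.single a.2 b.2 (by simpa using h)).trans ih

lemma reachable_of_reachIn {x y : V} (h : ReachIn G A x y) (hx : x ∈ A) (hy : y ∈ A) :
    (G.induce A).Reachable ⟨x, hx⟩ ⟨y, hy⟩ := by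
  induction h with
  | refl => exact Reachable.refl _
  | @tail b c hr hstep ih =>
      exact (ih hstep.1).trans (Adj.reachable (by simpa using hstep.2.2))

lemma preconnected_iff_reachIn :
    (G.induce A).Preconnected ↔ ∀ x ∈ A, ∀ y ∈ A, ReachIn G A x y := by
  constructor
  · intro h x hx y hy
    exact reachIn_of_reachable (h ⟨x, hx⟩ ⟨y, hy⟩)
  · intro h x y
    exact reachable_of_reachIn (h x x.2 y y.2) x.2 y.2

lemma connected_iff_reachIn :
    (G.induce A).Connected ↔ A.Nonempty ∧ ∀ x ∈ A, ∀ y ∈ A, ReachIn G A x y := by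
  rw [connected_iff, preconnected_iff_reachIn]
  constructor
  · rintro ⟨h1, ⟨a⟩⟩; exact ⟨⟨a, a.2⟩, h1⟩
  · rintro ⟨⟨a, ha⟩, h⟩; exact ⟨h, ⟨⟨a, ha⟩⟩⟩

end Bridge

/-- the connected component of `x` in `H \ {c}` -/
def compIn (G : SimpleGraph V) (H : Set V) (c x : V) : Set V :=
  {z | z ∈ H \ {c} ∧ ReachIn G (H \ {c}) x z}

section Comp

variable {G : SimpleGraph V} {H : Set V} {c x : V}

lemma compIn_subset : compIn G H c x ⊆ H \ {c} := fun z hz => hz.1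

lemma mem_compIn_self (hx : x ∈ H \ {c}) : x ∈ compIn G H c x := ⟨hx, ReachIn.refl⟩

lemma compIn_closure {z z' : V} (hz : z ∈ compIn G H c x) (hz' : z' ∈ H) (hne : z' ≠ c)
    (hadj : G.Adj z z') : z' ∈ compIn G H c x :=
  ⟨⟨hz', hne⟩, hz.2.trans (ReachIn.single hz.1 ⟨hz', hne⟩ hadj)⟩

lemma compIn_reach {a b : V} (ha : a ∈ compIn G H c x) (h : ReachIn G (H \ {c}) a b) :
    ReachIn G (compIn G H c x) a b := by
  induction h with
  | refl => exact ReachIn.refl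
  | @tail p q hr hstep ih =>
      have hp : p ∈ compIn G H c x := ⟨hstep.1, ha.2.trans hr⟩
      have hq : q ∈ compIn G H c x := ⟨hstep.2.1, ha.2.trans (hr.trans
        (Relation.ReflTransGen.single hstep))⟩
      exact ih.trans (ReachIn.single hp hq hstep.2.2)

lemma compIn_connected {a b : V} (ha : a ∈ compIn G H c x) (hb : b ∈ compIn G H c x) :
    ReachIn G (compIn G H c x) a b := by
  have hx : x ∈ H \ {c} := by
    rcases ha.2.eq_or_mem with h | h
    · exact h ▸ ha.1
    · exact h
  exact ((compIn_reach (mem_compIn_self hx) ha.2).symm).trans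
    (compIn_reach (mem_compIn_self hx) hb.2)

/-- dichotomy: any vertex reaching c either reaches v avoiding c, or reaches c avoiding v -/
lemma reach_dichotomy {v z : V} (hvc : v ≠ c) (h : ReachIn G H z c) :
    ReachIn G (H \ {v}) z c ∨ ReachIn G (H \ {c}) z v := by
  induction h using Relation.ReflTransGen.head_induction_on with
  | refl => exact Or.inl ReachIn.refl
  | @head a a' hstep hr ih =>
      rcases ih with hR | hL
      · by_cases hav : a = v
        · subst hav; exact Or.inr ReachIn.refl
        · have ha'v : a' ≠ v := by
            rintro rfl
            rcases hR.eq_or_mem with h | h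
            · exact hvc h
            · exact h.2 rfl
          exact Or.inl ((ReachIn.single (H := H \ {v}) ⟨hstep.1, hav⟩ ⟨hstep.2.1, ha'v⟩ hstep.2.2).trans hR)
      · by_cases hac : a = c
        · subst hac; exact Or.inl ReachIn.refl
        · have ha'c : a' ≠ c := by
            rintro rfl
            rcases hL.eq_or_mem with h | h
            · exact hvc h.symm
            · exact h.2 rfl
          exact Or.inr ((ReachIn.single (H := H \ {c}) ⟨hstep.1, hac⟩ ⟨hstep.2.1, ha'c⟩ hstep.2.2).trans hL)

end Comp


lemma pathGraph_no_triangle {n : ℕ} {i j k : Fin n} (hij : (pathGraph n).Adj i j)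
    (hik : (pathGraph n).Adj i k) (hjk : (pathGraph n).Adj j k) : False := by
  rw [pathGraph_adj] at hij hik hjk
  omega

lemma pathGraph_exists_neighbor {n : ℕ} (hn : 2 ≤ n) (i : Fin n) :
    ∃ j, (pathGraph n).Adj i j := by
  by_cases h : i.val = 0
  · exact ⟨⟨1, by omega⟩, by rw [pathGraph_adj]; simp [h]⟩
  · exact ⟨⟨i.val - 1, by omega⟩, by rw [pathGraph_adj]; right; simp; omega⟩

lemma pathGraph_endpoint {n : ℕ} {i j : Fin n}
    (h : ∀ k, (pathGraph n).Adj i k → k = j) : i.val = 0 ∨ i.val + 1 = n := by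
  by_contra hc
  push_neg at hc
  have h1 : i.val + 1 < n := by
    have := i.isLt; omega
  have h2 : 0 < i.val := by omega
  have e1 := h ⟨i.val + 1, h1⟩ (by rw [pathGraph_adj]; left; simp)
  have e2 := h ⟨i.val - 1, by omega⟩ (by rw [pathGraph_adj]; right; simp; omega)
  have c1 := congrArg Fin.val e1
  have c2 := congrArg Fin.val e2
  simp at c1 c2
  omega

lemma key_partner {G : SimpleGraph V} {B P : Set V} {n : ℕ}
    (hclique : ∀ u ∈ B, ∀ v ∈ B, u ≠ v → G.Adj u v)
    (hn : 2 ≤ n) (iso : G.induce P ≃g pathGraph n)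
    {v : V} (hvP : v ∈ P) (hvB : v ∈ B)
    (hnb : ∀ w ∈ P, G.Adj v w → w ∈ B) :
    ∃ w, w ∈ P ∧ w ∈ B ∧ G.Adj v w ∧ (∀ u ∈ P, G.Adj v u → u = w) ∧
      (∀ u ∈ P, u ∈ B → u = v ∨ u = w) := by
  set i : Fin n := iso ⟨v, hvP⟩ with hi
  obtain ⟨j, hj⟩ := pathGraph_exists_neighbor hn i
  set w' : ↥P := iso.symm j with hw'
  have hadjvw : G.Adj v ↑w' := by
    have : (G.induce P).Adj ⟨v, hvP⟩ w' := by
      rw [← iso.map_rel_iff]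
      simpa [hw'] using hj
    simpa using this
  have hwB : ↑w' ∈ B := hnb _ w'.2 hadjvw
  have huniq : ∀ u ∈ P, G.Adj v u → u = ↑w' := by
    intro u huP hadjvu
    by_contra hne
    have huB : u ∈ B := hnb _ huP hadjvu
    have hne_uv : u ≠ v := fun h => G.irrefl (h ▸ hadjvu)
    have hne_wv : (↑w' : V) ≠ v := fun h => G.irrefl (h ▸ hadjvw)
    have hadjuw : G.Adj u ↑w' := hclique _ huB _ hwB hne
    -- triangle in induce P
    have t1 : (G.induce P).Adj ⟨v, hvP⟩ ⟨u, huP⟩ := by simpa using hadjvu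
    have t2 : (G.induce P).Adj ⟨v, hvP⟩ w' := by simpa using hadjvw
    have t3 : (G.induce P).Adj ⟨u, huP⟩ w' := by simpa using hadjuw
    exact pathGraph_no_triangle (iso.map_rel_iff.mpr t1) (iso.map_rel_iff.mpr t2)
      (iso.map_rel_iff.mpr t3)
  refine ⟨↑w', w'.2, hwB, hadjvw, huniq, ?_⟩
  intro u huP huB
  by_cases h : u = v
  · exact Or.inl h
  · exact Or.inr (huniq u huP (hclique _ hvB _ huB (Ne.symm h)))

lemma key_order_two {G : SimpleGraph V} {P : Set V} {n : ℕ} (hn : 2 ≤ n)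
    (iso : G.induce P ≃g pathGraph n) {v w : V} (hvP : v ∈ P) (hwP : w ∈ P)
    (hadj : G.Adj v w) (hv : ∀ u ∈ P, G.Adj v u → u = w) (hw : ∀ u ∈ P, G.Adj w u → u = v) :
    P = {v, w} := by
  set i : Fin n := iso ⟨v, hvP⟩ with hi
  set j : Fin n := iso ⟨w, hwP⟩ with hj
  have hij : (pathGraph n).Adj i j := by
    apply iso.map_rel_iff.mpr
    simpa using hadj
  have hiend : i.val = 0 ∨ i.val + 1 = n := by
    apply pathGraph_endpoint (j := j)
    intro k hk
    have : G.Adj v ↑(iso.symm k) := by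
      have : (G.induce P).Adj ⟨v, hvP⟩ (iso.symm k) := by
        rw [← iso.map_rel_iff]; simpa using hk
      simpa using this
    have := hv _ (iso.symm k).2 this
    have h2 : iso.symm k = (⟨w, hwP⟩ : ↥P) := Subtype.ext this
    have h3 := congrArg iso h2
    simp only [RelIso.apply_symm_apply] at h3
    exact h3
  have hjend : j.val = 0 ∨ j.val + 1 = n := by
    apply pathGraph_endpoint (i := j) (j := i)
    intro k hk
    have : G.Adj w ↑(iso.symm k) := by
      have : (G.induce P).Adj ⟨w, hwP⟩ (iso.symm k) := by
        rw [← iso.map_rel_iff]; simpa using hk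
      simpa using this
    have := hw _ (iso.symm k).2 this
    have h2 : iso.symm k = (⟨v, hvP⟩ : ↥P) := Subtype.ext this
    have h3 := congrArg iso h2
    simp only [RelIso.apply_symm_apply] at h3
    exact h3
  have hn2 : n = 2 := by
    rw [pathGraph_adj] at hij
    omega
  -- now P has exactly 2 elements
  have hcard : Nat.card ↥P = 2 := by
    have : Nat.card ↥P = Nat.card (Fin n) := Nat.card_congr iso.toEquiv
    rw [this, hn2]; simp
  have hPn : P.ncard = 2 := by
    rw [← Nat.card_coe_set_eq]
    exact hcard
  have hvw : v ≠ w := G.ne_of_adj hadj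
  have hsub : {v, w} ⊆ P := by
    rintro u (rfl | rfl) <;> assumption
  symm
  apply Set.eq_of_subset_of_ncard_le hsub
  rw [hPn, Set.ncard_pair hvw]


lemma even_of_pair_cover : ∀ (n : ℕ) (S : Set V) (D : Set (Set V)), S.ncard = n →
    ⋃₀ D = S → (∀ P ∈ D, ∀ Q ∈ D, P ≠ Q → Disjoint P Q) → (∀ P ∈ D, P.ncard = 2) →
    Even n := by
  intro n
  induction n using Nat.strong_induction_on with
  | _ n ih =>
    intro S D hn hU hdisj hsize
    rcases S.eq_empty_or_nonempty with hS | ⟨x, hx⟩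
    · subst hS; simp at hn; subst hn; exact Even.zero
    · have hxU : x ∈ ⋃₀ D := hU ▸ hx
      obtain ⟨P, hPD, hxP⟩ := hxU
      have hPS : P ⊆ S := hU ▸ Set.subset_sUnion_of_mem hPD
      have hP2 : P.ncard = 2 := hsize P hPD
      have hn2 : 2 ≤ n := by
        rw [← hn, ← hP2]
        exact Set.ncard_le_ncard hPS S.toFinite
      have hU' : ⋃₀ (D \ {P}) = S \ P := by
        ext z
        constructor
        · rintro ⟨Q, ⟨hQD, hQP⟩, hzQ⟩
          refine ⟨hU ▸ Set.subset_sUnion_of_mem hQD hzQ, ?_⟩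
          intro hzP
          exact (hdisj Q hQD P hPD (by simpa using hQP)).ne_of_mem hzQ hzP rfl
        · rintro ⟨hzS, hzP⟩
          obtain ⟨Q, hQD, hzQ⟩ := (hU ▸ hzS : z ∈ ⋃₀ D)
          exact ⟨Q, ⟨hQD, fun h => hzP (by rwa [← (by simpa using h : Q = P)])⟩, hzQ⟩
      have hcard' : (S \ P).ncard = n - 2 := by
        rw [Set.ncard_diff hPS P.toFinite, hn, hP2]
      have heven := ih (n - 2) (by omega) (S \ P) (D \ {P}) hcard' hU'
        (fun A hA B hB hAB => hdisj A hA.1 B hB.1 hAB) (fun A hA => hsize A hA.1)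
      obtain ⟨k, hk⟩ := heven
      exact ⟨k + 1, by omega⟩


theorem aux_no_IPD (G : SimpleGraph V) : ∀ (n : ℕ) (H : Set V), H.ncard = n → H.Nonempty →
    (∀ x ∈ H, ∀ y ∈ H, ReachIn G H x y) →
    (∀ B : Set V, IsBlockWithin G H B → IsOddComplete G B) →
    ∀ D : Set (Set V), ⋃₀ D = H →
    (∀ P ∈ D, ∀ Q ∈ D, P ≠ Q → Disjoint P Q) →
    (∀ P ∈ D, ∃ m, 2 ≤ m ∧ IsInducedPathOn G P m) → False := by
  intro n
  induction n using Nat.strong_induction_on with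
  | _ n ih =>
  intro H hn hne hconn hodd D hU hdisj hpath
  classical
  have hPH : ∀ P ∈ D, P ⊆ H := fun P hP => hU ▸ Set.subset_sUnion_of_mem hP
  by_cases hcut : ∀ c ∈ H, ∀ a ∈ H \ {c}, ∀ b ∈ H \ {c}, ReachIn G (H \ {c}) a b
  · -- BASE CASE: no cut vertex, H is a single block
    have hblockH : IsBlockWithin G H H := by
      refine ⟨subset_rfl, ⟨connected_iff_reachIn.mpr ⟨hne, hconn⟩, ?_⟩,
        fun B' h1 h2 _ => subset_antisymm h2 h1⟩
      intro v hv
      rw [preconnected_iff_reachIn]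
      exact hcut v hv
    obtain ⟨hoddH, hcliqueH⟩ := hodd H hblockH
    have hP2 : ∀ P ∈ D, P.ncard = 2 := by
      intro P hP
      obtain ⟨m, hm, ⟨iso⟩⟩ := hpath P hP
      have hv0 : ((iso.symm ⟨0, by omega⟩ : ↥P) : V) ∈ P := (iso.symm ⟨0, by omega⟩).2
      set v : V := ↑(iso.symm ⟨0, by omega⟩) with hv
      obtain ⟨w, hwP, hwB, hadj, hvuniq, -⟩ := key_partner hcliqueH hm iso hv0
        (hPH P hP hv0) (fun u hu _ => hPH P hP hu)
      obtain ⟨w', hw'P, hw'B, hadj', hwuniq, -⟩ := key_partner hcliqueH hm iso hwP hwB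
        (fun u hu _ => hPH P hP hu)
      have hvw' : v = w' := hwuniq v hv0 hadj.symm
      have hPvw := key_order_two hm iso hv0 hwP hadj hvuniq
        (fun u hu ha => (hwuniq u hu ha).trans hvw'.symm)
      rw [hPvw, Set.ncard_pair (G.ne_of_adj hadj)]
    have heven := even_of_pair_cover n H D hn hU hdisj hP2
    rw [← hn] at heven
    exact (Nat.not_even_iff_odd.mpr hoddH) heven
  · -- INDUCTIVE CASE: there is a cut vertex
    push_neg at hcut
    obtain ⟨c0, hc0H, a0, ha0, b0, hb0, hnr0⟩ := hcut
    set T : Set ℕ := {m | ∃ c' x', c' ∈ H ∧ x' ∈ H \ {c'} ∧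
      (∃ y' ∈ H \ {c'}, ¬ ReachIn G (H \ {c'}) x' y') ∧ (compIn G H c' x').ncard = m} with hTdef
    have hTne : T.Nonempty := ⟨_, c0, a0, hc0H, ha0, ⟨b0, hb0, hnr0⟩, rfl⟩
    obtain ⟨c, x, hcH, hxH, ⟨y, hyH, hxy⟩, hCcard⟩ := Nat.sInf_mem hTne
    set C : Set V := compIn G H c x with hCdef
    have hxC : x ∈ C := mem_compIn_self hxH
    have hCsub : C ⊆ H \ {c} := compIn_subset
    have hCH : C ⊆ H := hCsub.trans Set.diff_subset
    have hCne : C.Nonempty := ⟨x, hxC⟩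
    have hyC : y ∉ C := fun h => hxy h.2
    have hccC : c ∉ C := fun h => (hCsub h).2 rfl
    -- F4: no vertex of C is a cut vertex of H
    have hF4 : ∀ v ∈ C, ∀ a ∈ H \ {v}, ∀ b ∈ H \ {v}, ReachIn G (H \ {v}) a b := by
      by_contra hF4c
      push_neg at hF4c
      obtain ⟨v, hvC, a, haH, b, hbH, hnab⟩ := hF4c
      have hvH : v ∈ H := hCH hvC
      have hvc : v ≠ c := (hCsub hvC).2
      obtain ⟨a', b', ha', hb', hnab', hnac'⟩ : ∃ a' b', a' ∈ H \ {v} ∧ b' ∈ H \ {v} ∧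
          ¬ ReachIn G (H \ {v}) a' b' ∧ ¬ ReachIn G (H \ {v}) a' c := by
        by_cases hac : ReachIn G (H \ {v}) a c
        · exact ⟨b, a, hbH, haH, fun hr => hnab hr.symm,
            fun hbc => hnab (hac.trans hbc.symm)⟩
        · exact ⟨a, b, haH, hbH, hnab, hac⟩
      set C' : Set V := compIn G H v a' with hC'def
      have hC'T : C'.ncard ∈ T := ⟨v, a', hvH, ha', ⟨b', hb', hnab'⟩, rfl⟩
      have hC'sub : C' ⊆ C \ {v} := by
        intro z hz
        have hzH : z ∈ H := hz.1.1
        have hzv : z ≠ v := hz.1.2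
        rcases reach_dichotomy (G := G) (H := H) (v := v) (c := c) hvc
            (hconn z hzH c hcH) with hL | hR
        · exact absurd (hz.2.trans hL) hnac'
        · have hzc : z ≠ c := by
            rintro rfl
            rcases hR.eq_or_mem with h | h
            · exact hvc h.symm
            · exact h.2 rfl
          exact ⟨⟨⟨hzH, hzc⟩, hvC.2.trans hR.symm⟩, hzv⟩
      have h1 : C'.ncard ≤ (C \ {v}).ncard := Set.ncard_le_ncard hC'sub (C \ {v}).toFinite
      have h2 : (C \ {v}).ncard = C.ncard - 1 := Set.ncard_diff_singleton_of_mem hvC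
      have h3 : 0 < C.ncard := (Set.ncard_pos C.toFinite).mpr hCne
      have h4 : sInf T ≤ C'.ncard := Nat.sInf_le hC'T
      omega
    set B : Set V := insert c C with hBdef
    have hcB : c ∈ B := Set.mem_insert _ _
    have hCB : C ⊆ B := Set.subset_insert _ _
    have hBH : B ⊆ H := Set.insert_subset hcH hCH
    have hblockB : IsBlockWithin G H B := by
      set g : V → V := fun t => if t ∈ C then t else c with hgdef
      have hgC : ∀ p ∈ C, g p = p := fun p hp => by simp [hgdef, hp]
      have hgc : g c = c := by simp [hgdef, hccC]
      have hgB : ∀ p ∈ B, g p = p := by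
        intro p hp
        rcases Set.mem_insert_iff.mp hp with rfl | hp
        · exact hgc
        · exact hgC p hp
      have hgstep1 : ∀ p q, StepIn G H p q → g p = g q ∨ StepIn G B (g p) (g q) := by
        rintro p q ⟨hpH, hqH, hadj⟩
        by_cases hpC : p ∈ C <;> by_cases hqC : q ∈ C
        · refine Or.inr ?_
          rw [hgC p hpC, hgC q hqC]
          exact ⟨hCB hpC, hCB hqC, hadj⟩
        · have hqc : q = c := by
            by_contra hqc
            exact hqC (compIn_closure hpC hqH hqc hadj)
          subst hqc
          refine Or.inr ?_
          rw [hgC p hpC, hgc]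
          exact ⟨hCB hpC, hcB, hadj⟩
        · have hpc : p = c := by
            by_contra hpc
            exact hpC (compIn_closure hqC hpH hpc hadj.symm)
          subst hpc
          refine Or.inr ?_
          rw [hgc, hgC q hqC]
          exact ⟨hcB, hCB hqC, hadj⟩
        · left; simp [hgdef, hpC, hqC]
      refine ⟨hBH, ⟨?_, ?_⟩, ?_⟩
      · rw [connected_iff_reachIn]
        refine ⟨⟨c, hcB⟩, ?_⟩
        have hrc : ∀ z ∈ B, ReachIn G B z c := by
          intro z hz
          rcases Set.mem_insert_iff.mp hz with rfl | hzC
          · exact ReachIn.refl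
          · have := ReachIn.map g hgstep1 (hconn z (hCH hzC) c hcH)
            rwa [hgC z hzC, hgc] at this
        exact fun a ha b hb => (hrc a ha).trans (hrc b hb).symm
      · intro v hvB
        rw [preconnected_iff_reachIn]
        rcases Set.mem_insert_iff.mp hvB with rfl | hvC
        · intro a ha b hb
          have haC : a ∈ C := (Set.mem_insert_iff.mp ha.1).resolve_left ha.2
          have hbC : b ∈ C := (Set.mem_insert_iff.mp hb.1).resolve_left hb.2
          exact (compIn_connected haC hbC).mono
            (fun t ht => ⟨hCB ht, (hCsub ht).2⟩)
        · intro a ha b hb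
          have hstep2 : ∀ p q, StepIn G (H \ {v}) p q →
              g p = g q ∨ StepIn G (B \ {v}) (g p) (g q) := by
            rintro p q ⟨⟨hpH, hpv⟩, ⟨hqH, hqv⟩, hadj⟩
            have hcv : c ≠ v := fun h => hccC (h ▸ hvC)
            by_cases hpC : p ∈ C <;> by_cases hqC : q ∈ C
            · refine Or.inr ?_
              rw [hgC p hpC, hgC q hqC]
              exact ⟨⟨hCB hpC, hpv⟩, ⟨hCB hqC, hqv⟩, hadj⟩
            · have hqc : q = c := by
                by_contra hqc; exact hqC (compIn_closure hpC hqH hqc hadj)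
              subst hqc
              refine Or.inr ?_
              rw [hgC p hpC, hgc]
              exact ⟨⟨hCB hpC, hpv⟩, ⟨hcB, hcv⟩, hadj⟩
            · have hpc : p = c := by
                by_contra hpc; exact hpC (compIn_closure hqC hpH hpc hadj.symm)
              subst hpc
              refine Or.inr ?_
              rw [hgc, hgC q hqC]
              exact ⟨⟨hcB, hcv⟩, ⟨hCB hqC, hqv⟩, hadj⟩
            · left; simp [hgdef, hpC, hqC]
          have haH : a ∈ H \ {v} := ⟨hBH ha.1, ha.2⟩
          have hbH : b ∈ H \ {v} := ⟨hBH hb.1, hb.2⟩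
          have := ReachIn.map g hstep2 (hF4 v hvC a haH b hbH)
          rwa [hgB a ha.1, hgB b hb.1] at this
      · rintro B' hBB' hB'H ⟨hB'conn, hB'cut⟩
        refine subset_antisymm ?_ hBB'
        intro z hzB'
        by_contra hzB
        have hzc : z ≠ c := fun h => hzB (h ▸ hcB)
        have hzC : z ∉ C := fun h => hzB (hCB h)
        have hpre := hB'cut c (hBB' hcB)
        rw [preconnected_iff_reachIn] at hpre
        have hxc : x ≠ c := (hCsub hxC).2
        have hr := hpre x ⟨hBB' (hCB hxC), hxc⟩ z ⟨hzB', hzc⟩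
        have hr' := hr.mono (fun t ht => ⟨hB'H ht.1, ht.2⟩ : B' \ {c} ⊆ H \ {c})
        exact hzC ⟨⟨hB'H hzB', hzc⟩, hr'⟩
    obtain ⟨hoddB, hcliqueB⟩ := hodd B hblockB
    have hCeven : Even C.ncard := by
      have : B.ncard = C.ncard + 1 := Set.ncard_insert_of_notMem hccC C.toFinite
      rw [this] at hoddB
      rw [Nat.even_iff]; rw [Nat.odd_iff] at hoddB; omega
    -- partner assignment
    have hpart : ∀ v ∈ C, ∃ P ∈ D, v ∈ P ∧ ∃ w, w ∈ P ∧ w ∈ B ∧ G.Adj v w ∧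
        (∀ u ∈ P, G.Adj v u → u = w) ∧ (∀ u ∈ P, u ∈ B → u = v ∨ u = w) := by
      intro v hvC
      have hvH : v ∈ H := hCH hvC
      have hvU : v ∈ ⋃₀ D := hU ▸ hvH
      obtain ⟨P, hPD, hvP⟩ := hvU
      obtain ⟨m, hm, ⟨iso⟩⟩ := hpath P hPD
      have hnb : ∀ u ∈ P, G.Adj v u → u ∈ B := by
        intro u huP hadj
        by_cases huc : u = c
        · rw [huc]; exact hcB
        · exact hCB (compIn_closure hvC (hPH P hPD huP) huc hadj)
      obtain ⟨w, hw⟩ := key_partner hcliqueB hm iso hvP (hCB hvC) hnb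
      exact ⟨P, hPD, hvP, w, hw⟩
    have hPuniq : ∀ P ∈ D, ∀ Q ∈ D, ∀ z, z ∈ P → z ∈ Q → P = Q := by
      intro P hP Q hQ z hzP hzQ
      by_contra hne'
      exact (hdisj P hP Q hQ hne').ne_of_mem hzP hzQ rfl
    by_cases hex : ∃ v ∈ C, ∃ P ∈ D, v ∈ P ∧ c ∈ P
    · -- some vertex of C shares its path with c: parity contradiction
      obtain ⟨v0, hv0C, P0, hP0D, hv0P0, hcP0⟩ := hex
      set S : Set V := C \ {v0} with hSdef
      have hc1 : ∀ P ∈ D, ∀ u, u ∈ P → u ∈ S → ∃ w, w ∈ S ∧ u ≠ w ∧ P ∩ C = {u, w} := by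
        intro P hP u huP huS
        have huC : u ∈ C := huS.1
        have huv0 : u ≠ v0 := huS.2
        obtain ⟨Pu, hPuD, huPu, w, hwPu, hwB, hadj, huniq, hcover⟩ := hpart u huC
        have hPPu : P = Pu := hPuniq P hP Pu hPuD u huP huPu
        subst hPPu
        have hwc : w ≠ c := by
          intro h
          have hcPu : c ∈ P := h ▸ hwPu
          have hP0P : P0 = P := hPuniq P0 hP0D P hP c hcP0 hcPu
          rcases hcover v0 (hP0P ▸ hv0P0) (hCB hv0C) with h' | h'
          · exact huv0 h'.symm
          · exact hccC ((h'.trans h) ▸ hv0C)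
        have hwC : w ∈ C := (Set.mem_insert_iff.mp hwB).resolve_left hwc
        have hwv0 : w ≠ v0 := by
          intro h
          have hv0Pu : v0 ∈ P := h ▸ hwPu
          have hP0P : P0 = P := hPuniq P0 hP0D P hP v0 hv0P0 hv0Pu
          rcases hcover c (hP0P ▸ hcP0) hcB with h' | h'
          · exact hccC (h' ▸ huC)
          · exact hccC ((h'.trans h) ▸ hv0C)
        refine ⟨w, ⟨hwC, hwv0⟩, G.ne_of_adj hadj, ?_⟩
        ext z
        constructor
        · rintro ⟨hzP, hzC⟩
          rcases hcover z hzP (hCB hzC) with h | h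
          · exact Or.inl h
          · exact Or.inr h
        · rintro (rfl | rfl)
          · exact ⟨huP, huC⟩
          · exact ⟨hwPu, hwC⟩
      set D2 : Set (Set V) := {Q | ∃ P ∈ D, (P ∩ S).Nonempty ∧ Q = P ∩ C} with hD2def
      have hcover2 : ⋃₀ D2 = S := by
        ext t
        constructor
        · rintro ⟨Q, ⟨P, hP, ⟨u, huP, huS⟩, rfl⟩, htQ⟩
          obtain ⟨w, hwS, hne', hPC⟩ := hc1 P hP u huP huS
          rw [hPC] at htQ
          rcases htQ with rfl | rfl
          · exact huS
          · exact hwS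
        · intro htS
          have htH : t ∈ H := hCH htS.1
          obtain ⟨P, hP, htP⟩ : t ∈ ⋃₀ D := hU ▸ htH
          exact ⟨P ∩ C, ⟨P, hP, ⟨t, htP, htS⟩, rfl⟩, htP, htS.1⟩
      have hsizes : ∀ Q ∈ D2, Q.ncard = 2 := by
        rintro Q ⟨P, hP, ⟨u, huP, huS⟩, rfl⟩
        obtain ⟨w, hwS, hne', hPC⟩ := hc1 P hP u huP huS
        rw [hPC, Set.ncard_pair hne']
      have hdisj2 : ∀ Q1 ∈ D2, ∀ Q2 ∈ D2, Q1 ≠ Q2 → Disjoint Q1 Q2 := by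
        rintro Q1 ⟨P1, hP1, h1, rfl⟩ Q2 ⟨P2, hP2, h2, rfl⟩ hne'
        have hP12 : P1 ≠ P2 := fun h => hne' (by rw [h])
        exact (hdisj P1 hP1 P2 hP2 hP12).mono Set.inter_subset_left Set.inter_subset_left
      have heven := even_of_pair_cover S.ncard S D2 rfl hcover2 hdisj2 hsizes
      have h1 : S.ncard = C.ncard - 1 := Set.ncard_diff_singleton_of_mem hv0C
      have h2 : 0 < C.ncard := (Set.ncard_pos C.toFinite).mpr hCne
      rw [Nat.even_iff] at heven hCeven
      omega
    · -- every path meeting C is a pair inside C: recurse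
      push_neg at hex
      have hpair : ∀ P ∈ D, ∀ v, v ∈ P → v ∈ C → P ⊆ C := by
        intro P hP v hvP hvC
        obtain ⟨Pv, hPvD, hvPv, w, hwPv, hwB, hadj, huniq, hcover⟩ := hpart v hvC
        have hPPv : P = Pv := hPuniq P hP Pv hPvD v hvP hvPv
        subst hPPv
        have hwc : w ≠ c := fun h => hex v hvC P hP hvPv (h ▸ hwPv)
        have hwC : w ∈ C := (Set.mem_insert_iff.mp hwB).resolve_left hwc
        obtain ⟨Pw, hPwD, hwPw, w', hw'Pw, hw'B, hadj', huniq', hcover'⟩ := hpart w hwC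
        have hPwP : Pw = P := hPuniq Pw hPwD P hP w hwPw hwPv
        subst hPwP
        have hw'v : w' = v := (huniq' v hvPv hadj.symm).symm
        obtain ⟨m, hm, ⟨iso⟩⟩ := hpath Pw hP
        have hPvw := key_order_two hm iso hvPv hwPv hadj huniq
          (fun u hu ha => (huniq' u hu ha).trans hw'v)
        rw [hPvw]
        rintro t (rfl | rfl)
        · exact hvC
        · exact hwC
      set D' : Set (Set V) := {P ∈ D | Disjoint P C} with hD'def
      have hU' : ⋃₀ D' = H \ C := by
        ext t
        constructor
        · rintro ⟨P, ⟨hP, hPdisj⟩, htP⟩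
          exact ⟨hPH P hP htP, fun htC => (hPdisj.ne_of_mem htP htC) rfl⟩
        · rintro ⟨htH, htC⟩
          obtain ⟨P, hP, htP⟩ : t ∈ ⋃₀ D := hU ▸ htH
          refine ⟨P, ⟨hP, ?_⟩, htP⟩
          rw [Set.disjoint_left]
          intro u huP huC
          exact htC (hpair P hP u huP huC htP)
      have hltcard : (H \ C).ncard < n := by
        have h1 : (H \ C).ncard = H.ncard - C.ncard := Set.ncard_diff hCH C.toFinite
        have h2 : 0 < C.ncard := (Set.ncard_pos C.toFinite).mpr hCne
        have h3 : C.ncard ≤ H.ncard := Set.ncard_le_ncard hCH H.toFinite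
        omega
      set f : V → V := fun t => if t ∈ C then c else t with hfdef
      have hff : ∀ p, p ∉ C → f p = p := fun p hp => by simp [hfdef, hp]
      have hfstep : ∀ p q, StepIn G H p q → f p = f q ∨ StepIn G (H \ C) (f p) (f q) := by
        rintro p q ⟨hpH, hqH, hadj⟩
        by_cases hpC : p ∈ C <;> by_cases hqC : q ∈ C
        · left; simp [hfdef, hpC, hqC]
        · have hqc : q = c := by
            by_contra hqc; exact hqC (compIn_closure hpC hqH hqc hadj)
          left; simp [hfdef, hpC, hqC, hqc]
        · have hpc : p = c := by
            by_contra hpc; exact hpC (compIn_closure hqC hpH hpc hadj.symm)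
          left; simp [hfdef, hpC, hqC, hpc]
        · refine Or.inr ?_
          rw [hff p hpC, hff q hqC]
          exact ⟨⟨hpH, hpC⟩, ⟨hqH, hqC⟩, hadj⟩
      have hconn' : ∀ a ∈ H \ C, ∀ b ∈ H \ C, ReachIn G (H \ C) a b := by
        intro a ha b hb
        have := ReachIn.map f hfstep (hconn a ha.1 b hb.1)
        rwa [hff a ha.2, hff b hb.2] at this
      have hblocks' : ∀ B'', IsBlockWithin G (H \ C) B'' → IsOddComplete G B'' := by
        rintro B'' ⟨hB''sub, hB''ncvs, hB''max⟩
        apply hodd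
        refine ⟨hB''sub.trans Set.diff_subset, hB''ncvs, ?_⟩
        intro B3 hsub3 hsub3H hncvs3
        by_cases hBC : ∃ z ∈ B3, z ∈ C
        · obtain ⟨z, hzB3, hzC⟩ := hBC
          exfalso
          by_cases hBext : ∃ w ∈ B3, w ∉ C ∧ w ≠ c
          · obtain ⟨w, hwB3, hwC, hwc⟩ := hBext
            have hzc : z ≠ c := (hCsub hzC).2
            have hreach : ReachIn G (H \ {c}) z w := by
              by_cases hcB3 : c ∈ B3
              · have hpre := hncvs3.2 c hcB3
                rw [preconnected_iff_reachIn] at hpre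
                exact (hpre z ⟨hzB3, hzc⟩ w ⟨hwB3, hwc⟩).mono
                  (fun t ht => ⟨hsub3H ht.1, ht.2⟩)
              · have hco := (connected_iff_reachIn.mp hncvs3.1).2 z hzB3 w hwB3
                exact hco.mono (fun t ht => ⟨hsub3H ht, fun h => hcB3 (h ▸ ht)⟩)
            exact hwC ⟨⟨hsub3H hwB3, hwc⟩, hzC.2.trans hreach⟩
          · push_neg at hBext
            have hB''ne : B''.Nonempty := (connected_iff_reachIn.mp hB''ncvs.1).1
            have hB''c : B'' = {c} := by
              apply Set.eq_singleton_iff_nonempty_unique_mem.mpr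
              refine ⟨hB''ne, ?_⟩
              intro w hwB''
              exact hBext w (hsub3 hwB'') (hB''sub hwB'').2
            have hcy : c ≠ y := fun h => hyH.2 h.symm
            have hrcy : ReachIn G (H \ C) c y := by
              have := ReachIn.map f hfstep (hconn c hcH y hyH.1)
              rwa [hff c hccC, hff y hyC] at this
            rcases Relation.ReflTransGen.cases_head hrcy with heq | ⟨z', hstep, -⟩
            · exact hcy heq
            · have hz'c : z' ≠ c := fun h => G.irrefl (h ▸ hstep.2.2)
              have hz'mem : z' ∈ insert c ({z'} : Set V) := Set.mem_insert_of_mem _ rfl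
              have hcmem : c ∈ insert c ({z'} : Set V) := Set.mem_insert _ _
              have hadjcz : G.Adj c z' := hstep.2.2
              have hncvsBt : NoCutVertexSet G (insert c ({z'} : Set V)) := by
                constructor
                · rw [connected_iff_reachIn]
                  refine ⟨⟨c, hcmem⟩, ?_⟩
                  intro a ha b hb
                  rcases Set.mem_insert_iff.mp ha with rfl | ha'
                  · rcases Set.mem_insert_iff.mp hb with rfl | hb'
                    · exact ReachIn.refl
                    · rw [Set.mem_singleton_iff.mp hb']
                      exact ReachIn.single hcmem hz'mem hadjcz
                  · rw [Set.mem_singleton_iff.mp ha']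
                    rcases Set.mem_insert_iff.mp hb with rfl | hb'
                    · exact ReachIn.single hz'mem hcmem hadjcz.symm
                    · rw [Set.mem_singleton_iff.mp hb']
                      exact ReachIn.refl
                · intro v hv
                  rw [preconnected_iff_reachIn]
                  intro a ha b hb
                  have hab : a = b := by
                    rcases Set.mem_insert_iff.mp hv with rfl | hv'
                    · have ha' : a = z' := by
                        rcases Set.mem_insert_iff.mp ha.1 with rfl | h
                        · exact absurd rfl ha.2
                        · exact Set.mem_singleton_iff.mp h
                      have hb' : b = z' := by
                        rcases Set.mem_insert_iff.mp hb.1 with rfl | h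
                        · exact absurd rfl hb.2
                        · exact Set.mem_singleton_iff.mp h
                      rw [ha', hb']
                    · have hv2 : v = z' := Set.mem_singleton_iff.mp hv'
                      subst hv2
                      have ha' : a = c := by
                        rcases Set.mem_insert_iff.mp ha.1 with rfl | h
                        · rfl
                        · exact absurd h ha.2
                      have hb' : b = c := by
                        rcases Set.mem_insert_iff.mp hb.1 with rfl | h
                        · rfl
                        · exact absurd h hb.2
                      rw [ha', hb']
                  rw [hab]
                  exact ReachIn.refl
              have hBt := hB''max (insert c ({z'} : Set V))
                (by rw [hB''c]; exact Set.singleton_subset_iff.mpr hcmem)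
                (by
                  intro t ht
                  rcases Set.mem_insert_iff.mp ht with rfl | ht'
                  · exact ⟨hcH, hccC⟩
                  · rw [Set.mem_singleton_iff.mp ht']
                    exact hstep.2.1)
                hncvsBt
              have : z' ∈ B'' := hBt ▸ hz'mem
              rw [hB''c] at this
              exact hz'c this
        · push_neg at hBC
          exact hB''max B3 hsub3 (fun t ht => ⟨hsub3H ht, hBC t ht⟩) hncvs3
      exact ih (H \ C).ncard hltcard (H \ C) rfl ⟨c, hcH, hccC⟩ hconn' hblocks' D' hU'
        (fun P hP Q hQ hne' => hdisj P hP.1 Q hQ.1 hne')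
        (fun P hP => hpath P hP.1)

lemma reachIn_univ_of_reachable {G : SimpleGraph V} {x y : V} (h : G.Reachable x y) :
    ReachIn G Set.univ x y := by
  obtain ⟨w⟩ := h
  induction w with
  | nil => exact ReachIn.refl
  | cons h p ih => exact (ReachIn.single (Set.mem_univ _) (Set.mem_univ _) h).trans ih


/-- a connected graph all of whose blocks are complete graphs of odd
order has no IPD. -/
theorem all_blocks_odd_complete_no_IPD (G : SimpleGraph V)
    (hconn : G.Connected)
    (hbad : ∀ B : Set V, IsBlock G B → IsOddComplete G B) :
    ¬ HasIPD G := by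
  rintro ⟨D, hpartn, hpaths⟩
  have : Nonempty V := hconn.nonempty
  exact aux_no_IPD G (Set.univ : Set V).ncard Set.univ rfl
    ⟨Classical.arbitrary V, Set.mem_univ _⟩
    (fun x _ y _ => reachIn_univ_of_reachable (hconn x y))
    hbad D hpartn.sUnion_eq_univ
    (fun P hP Q hQ hne => hpartn.pairwiseDisjoint hP hQ hne)
    hpaths
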